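/- Let L_t = ct − N_t with c > 0 and N a Poisson process with intensity λ > 0 (i.e., the jump distribution is Π = δ_1). Then the 0-scale function of L is W^{(0)}(x) = (1/c) Σ_{s=0}^{⌊x⌋} (e^{−(λ/c)(s−x)} / s!) (λ/c)^s (s−x)^s for all x ≥ 0. -/

import Mathlib

open MeasureTheory Filter Set Topology

lemma aux_integrable_exp_pow {a : ℝ} (ha : 0 < a) (s : ℕ) :
    IntegrableOn (fun x : ℝ => Real.exp (-(a * x)) * x ^ s) (Ioi 0) := by
  have h := integrableOn_rpow_mul_exp_neg_mul_rpow (p := 1) (s := (s : ℝ)) (b := a)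
    (by exact lt_of_lt_of_le (by norm_num) (Nat.cast_nonneg s)) one_pos ha
  refine h.congr_fun (fun x hx => ?_) measurableSet_Ioi
  beta_reduce; rw [Real.rpow_one, Real.rpow_natCast, mul_comm, neg_mul]

lemma aux_exp_pow_integral {a : ℝ} (ha : 0 < a) (s : ℕ) :
    ∫ x in Ioi (0:ℝ), Real.exp (-(a * x)) * x ^ s = s.factorial / a ^ (s + 1) := by
  have h := Real.integral_rpow_mul_exp_neg_mul_Ioi (a := (s + 1 : ℝ)) (r := a)
    (by positivity) ha
  have h2 : ∀ x ∈ Ioi (0:ℝ), x ^ ((s + 1 : ℝ) - 1) * Real.exp (-(a * x))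
      = Real.exp (-(a * x)) * x ^ s := by
    intro x hx
    rw [add_sub_cancel_right, Real.rpow_natCast, mul_comm]
  rw [setIntegral_congr_fun measurableSet_Ioi h2] at h
  rw [h, Real.Gamma_nat_eq_factorial]
  have : ((s:ℝ) + 1) = ((s + 1 : ℕ) : ℝ) := by push_cast; ring
  rw [this, Real.rpow_natCast]
  rw [div_pow, one_pow, div_mul_eq_mul_div, one_mul]


lemma aux_shift_integral (a : ℝ) (g : ℝ → ℝ) :
    ∫ x in Ioi a, g x = ∫ x in Ioi (0:ℝ), g (x + a) := by
  have h := integral_image_eq_integral_abs_deriv_smul (s := Ioi (0:ℝ)) (f := fun x => x + a)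
    (f' := fun _ => 1) measurableSet_Ioi
    (fun x _ => ((hasDerivAt_id x).add_const a).hasDerivWithinAt)
    (fun x _ y _ h => by simpa using h) g
  rw [Set.image_add_const_Ioi, zero_add] at h
  simpa using h

lemma aux_shift_integrable (a : ℝ) (g : ℝ → ℝ) :
    IntegrableOn g (Ioi a) ↔ IntegrableOn (fun x => g (x + a)) (Ioi (0:ℝ)) := by
  have h := integrableOn_image_iff_integrableOn_abs_deriv_smul (s := Ioi (0:ℝ))
    (f := fun x => x + a) (f' := fun _ => 1) measurableSet_Ioi
    (fun x _ => ((hasDerivAt_id x).add_const a).hasDerivWithinAt)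
    (fun x _ y _ h => by simpa using h) g
  rw [Set.image_add_const_Ioi, zero_add] at h
  simpa using h

lemma aux_ae_Ioi {ν : ℝ} (hν : 0 ≤ ν) : (Ici ν ∩ Ioi 0 : Set ℝ) =ᵐ[volume] (Ioi ν : Set ℝ) := by
  rw [MeasureTheory.ae_eq_set]
  constructor
  · refine measure_mono_null (fun x hx => ?_) (measure_singleton ν)
    rcases hx with ⟨⟨h1, _⟩, h3⟩
    simp only [mem_Ioi, not_lt] at h3
    exact mem_singleton_iff.2 (le_antisymm h3 h1)
  · refine measure_mono_null (fun x hx => ?_) (measure_empty (μ := volume))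
    rcases hx with ⟨h1, h2⟩
    exact absurd ⟨mem_Ici.2 (le_of_lt h1), lt_of_le_of_lt hν h1⟩ h2

lemma aux_ind_integral {ν : ℝ} (hν : 0 ≤ ν) (g : ℝ → ℝ) :
    ∫ x in Ioi (0:ℝ), (Ici ν).indicator g x = ∫ x in Ioi (0:ℝ), g (x + ν) := by
  rw [MeasureTheory.setIntegral_indicator measurableSet_Ici]
  have : (Ioi (0:ℝ) ∩ Ici ν) = (Ici ν ∩ Ioi 0) := Set.inter_comm _ _
  rw [this, Measure.restrict_congr_set (aux_ae_Ioi hν), aux_shift_integral]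

lemma aux_ind_integrable {ν : ℝ} (hν : 0 ≤ ν) (g : ℝ → ℝ)
    (hg : IntegrableOn (fun x => g (x + ν)) (Ioi (0:ℝ))) :
    IntegrableOn ((Ici ν).indicator g) (Ioi (0:ℝ)) := by
  rw [IntegrableOn, integrable_indicator_iff measurableSet_Ici, IntegrableOn,
    Measure.restrict_restrict measurableSet_Ici,
    Measure.restrict_congr_set (aux_ae_Ioi hν), ← IntegrableOn, aux_shift_integrable]
  exact hg


noncomputable def erlG (r β : ℝ) (s : ℕ) : ℝ → ℝ :=
  fun x => Real.exp (-β*x) * (Real.exp (-r*((s:ℝ)-x)) / (s.factorial:ℝ) * r^s * ((s:ℝ)-x)^s)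

lemma erlG_shift {r β : ℝ} (s : ℕ) (x : ℝ) :
    erlG r β s (x + s) = (Real.exp (-β*s) * (-r)^s / (s.factorial:ℝ))
      * (Real.exp (-((β-r)*x)) * x^s) := by
  unfold erlG
  have h0 : (s:ℝ) - (x + s) = -x := by ring
  rw [h0]
  have e1 : Real.exp (-β*(x+s)) = Real.exp (-β*x) * Real.exp (-β*(s:ℝ)) := by
    rw [← Real.exp_add]; congr 1; ring
  have e2 : Real.exp (-((β-r)*x)) = Real.exp (-β*x) * Real.exp (r*x) := by
    rw [← Real.exp_add]; congr 1; ring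
  have e3 : Real.exp (-r*(-x)) = Real.exp (r*x) := by congr 1; ring
  rw [e1, e2, e3, neg_pow x, neg_pow r]
  ring

lemma aux_term_integral {r β : ℝ} (hr : 0 < r) (hβ : r < β) (s : ℕ) :
    ∫ x in Ioi (0:ℝ), (Ici (s:ℝ)).indicator (erlG r β s) x
      = Real.exp (-β*s) * (-r)^s / (β-r)^(s+1) := by
  rw [aux_ind_integral (Nat.cast_nonneg s)]
  have : (fun x => erlG r β s (x + s))
      = fun x => (Real.exp (-β*s) * (-r)^s / (s.factorial:ℝ))
        * (Real.exp (-((β-r)*x)) * x^s) := funext (erlG_shift s)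
  rw [this, integral_const_mul, aux_exp_pow_integral (by linarith) s]
  have hf : ((s.factorial : ℝ)) ≠ 0 := Nat.cast_ne_zero.2 s.factorial_ne_zero
  field_simp

lemma aux_term_integrable {r β : ℝ} (hr : 0 < r) (hβ : r < β) (s : ℕ) :
    IntegrableOn ((Ici (s:ℝ)).indicator (erlG r β s)) (Ioi (0:ℝ)) := by
  apply aux_ind_integrable (Nat.cast_nonneg s)
  have : (fun x => erlG r β s (x + s))
      = fun x => (Real.exp (-β*s) * (-r)^s / (s.factorial:ℝ))
        * (Real.exp (-((β-r)*x)) * x^s) := funext (erlG_shift s)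
  rw [this]
  exact (aux_integrable_exp_pow (by linarith : (0:ℝ) < β - r) s).const_mul _

lemma aux_term_norm_integral {r β : ℝ} (hr : 0 < r) (hβ : r < β) (s : ℕ) :
    ∫ x in Ioi (0:ℝ), ‖(Ici (s:ℝ)).indicator (erlG r β s) x‖
      = Real.exp (-β*s) * r^s / (β-r)^(s+1) := by
  have hn : (fun x => ‖(Ici (s:ℝ)).indicator (erlG r β s) x‖)
      = fun x => (Ici (s:ℝ)).indicator (fun y => ‖erlG r β s y‖) x := by
    funext x; exact norm_indicator_eq_indicator_norm _ _
  rw [hn, aux_ind_integral (Nat.cast_nonneg s)]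
  have hcong : ∀ x ∈ Ioi (0:ℝ), ‖erlG r β s (x + s)‖
      = (Real.exp (-β*s) * r^s / (s.factorial:ℝ)) * (Real.exp (-((β-r)*x)) * x^s) := by
    intro x hx
    rw [erlG_shift]
    rw [Real.norm_eq_abs, abs_mul, abs_div, abs_mul]
    rw [abs_of_pos (Real.exp_pos _)]
    rw [abs_of_nonneg (by positivity : (0:ℝ) ≤ (s.factorial:ℝ))]
    rw [abs_of_nonneg (mul_nonneg (Real.exp_pos _).le (pow_nonneg (le_of_lt (mem_Ioi.1 hx)) s))]
    rw [abs_pow, abs_neg, abs_of_pos hr]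
  rw [setIntegral_congr_fun measurableSet_Ioi hcong,
    integral_const_mul, aux_exp_pow_integral (by linarith) s]
  have hf : ((s.factorial : ℝ)) ≠ 0 := Nat.cast_ne_zero.2 s.factorial_ne_zero
  field_simp

lemma aux_facts {r β : ℝ} (hr : 0 < r) (hβ : 2*r + 1 ≤ β) :
    r * Real.exp (-β) < β - r ∧ 0 < β - r := by
  have h1 : (0:ℝ) < β - r := by linarith
  have h2 : Real.exp (-β) ≤ 1 := Real.exp_le_one_iff.2 (by linarith)
  refine ⟨?_, h1⟩
  have : r * Real.exp (-β) ≤ r * 1 := by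
    apply mul_le_mul_of_nonneg_left h2 hr.le
  nlinarith

lemma aux_hasSum {r β : ℝ} (hr : 0 < r) (hβ : 2*r + 1 ≤ β) :
    HasSum (fun s : ℕ => Real.exp (-β*s) * (-r)^s / (β-r)^(s+1))
      (1/(β - r + r * Real.exp (-β))) := by
  obtain ⟨hlt, hpos⟩ := aux_facts hr hβ
  have hne : β - r ≠ 0 := ne_of_gt hpos
  have key : ∀ s : ℕ, Real.exp (-β*s) * (-r)^s / (β-r)^(s+1)
      = ((-r) * Real.exp (-β) / (β-r))^s * (1/(β-r)) := by
    intro s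
    have e : Real.exp (-β*(s:ℝ)) = (Real.exp (-β))^s := by
      rw [← Real.exp_nat_mul]; congr 1; ring
    rw [e, div_pow, mul_pow, pow_succ]
    field_simp
  have hn : ‖(-r) * Real.exp (-β) / (β-r)‖ < 1 := by
    rw [Real.norm_eq_abs, abs_div, abs_mul, abs_neg, abs_of_pos hr,
      abs_of_pos (Real.exp_pos _), abs_of_pos hpos, div_lt_one hpos]
    exact hlt
  have hs := (hasSum_geometric_of_norm_lt_one hn).mul_right (1/(β-r))
  have hv : (1 - (-r) * Real.exp (-β) / (β-r))⁻¹ * (1/(β-r))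
      = 1/(β - r + r * Real.exp (-β)) := by
    have hd : (0:ℝ) < β - r + r * Real.exp (-β) := by positivity
    field_simp
    rw [sub_neg_eq_add, div_self hd.ne']
  rw [hv] at hs
  have : (fun s : ℕ => Real.exp (-β*s) * (-r)^s / (β-r)^(s+1))
      = fun s => ((-r) * Real.exp (-β) / (β-r))^s * (1/(β-r)) := funext key
  rw [this]
  exact hs

lemma aux_summable_norm {r β : ℝ} (hr : 0 < r) (hβ : 2*r + 1 ≤ β) :
    Summable (fun s : ℕ => Real.exp (-β*s) * r^s / (β-r)^(s+1)) := by
  obtain ⟨hlt, hpos⟩ := aux_facts hr hβ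
  have hne : β - r ≠ 0 := ne_of_gt hpos
  have key : ∀ s : ℕ, Real.exp (-β*s) * r^s / (β-r)^(s+1)
      = (r * Real.exp (-β) / (β-r))^s * (1/(β-r)) := by
    intro s
    have e : Real.exp (-β*(s:ℝ)) = (Real.exp (-β))^s := by
      rw [← Real.exp_nat_mul]; congr 1; ring
    rw [e, div_pow, mul_pow, pow_succ]
    field_simp
  have hn : ‖r * Real.exp (-β) / (β-r)‖ < 1 := by
    rw [Real.norm_eq_abs, abs_div, abs_mul, abs_of_pos hr,
      abs_of_pos (Real.exp_pos _), abs_of_pos hpos, div_lt_one hpos]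
    exact hlt
  have : (fun s : ℕ => Real.exp (-β*s) * r^s / (β-r)^(s+1))
      = fun s => (r * Real.exp (-β) / (β-r))^s * (1/(β-r)) := funext key
  rw [this]
  exact (summable_geometric_of_norm_lt_one hn).mul_right _

noncomputable def erlV (c r : ℝ) (x : ℝ) : ℝ :=
  (1 / c) * ∑ s ∈ Finset.range ((⌊x⌋).toNat + 1),
    Real.exp (-r * ((s : ℝ) - x)) / (Nat.factorial s : ℝ) * r ^ s * ((s : ℝ) - x) ^ s

lemma floor_cast_le {x : ℝ} (hx : 0 ≤ x) : ((⌊x⌋.toNat : ℝ)) ≤ x := by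
  have h0 := Int.floor_nonneg.2 hx
  have e : ((⌊x⌋.toNat : ℝ)) = ((⌊x⌋ : ℤ) : ℝ) := by exact_mod_cast Int.toNat_of_nonneg h0
  rw [e]
  exact Int.floor_le x

lemma mem_range_cast_le {x : ℝ} (hx : 0 ≤ x) {s : ℕ}
    (hs : s ∈ Finset.range ((⌊x⌋).toNat + 1)) : (s : ℝ) ≤ x := by
  have h1 : s ≤ ⌊x⌋.toNat := Nat.lt_succ_iff.1 (Finset.mem_range.1 hs)
  exact le_trans (by exact_mod_cast Nat.cast_le.2 h1) (floor_cast_le hx)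

lemma erlV_eq_tsum {c r β : ℝ} (x : ℝ) (hx : 0 ≤ x) :
    Real.exp (-β*x) * erlV c r x
      = (1/c) * ∑' s : ℕ, (Ici (s:ℝ)).indicator (erlG r β s) x := by
  rw [tsum_eq_sum (s := Finset.range ((⌊x⌋).toNat + 1)) ?h0]
  · unfold erlV erlG
    rw [Finset.mul_sum, Finset.mul_sum, Finset.mul_sum]
    apply Finset.sum_congr rfl
    intro s hs
    have hmem : x ∈ Ici ((s:ℝ)) := mem_range_cast_le hx hs
    rw [Set.indicator_of_mem hmem]
    ring
  · intro s hs
    apply Set.indicator_of_notMem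
    simp only [mem_Ici, not_le]
    have h1 : ⌊x⌋.toNat + 1 ≤ s := Nat.not_lt.1 (fun h => hs (Finset.mem_range.2 h))
    have h2 : x < (⌊x⌋.toNat : ℝ) + 1 := by
      have h0 := Int.floor_nonneg.2 hx
      have e : ((⌊x⌋.toNat : ℝ)) = ((⌊x⌋ : ℤ) : ℝ) := by exact_mod_cast Int.toNat_of_nonneg h0
      rw [e]
      exact Int.lt_floor_add_one x
    calc x < (⌊x⌋.toNat : ℝ) + 1 := h2
    _ ≤ (s : ℝ) := by exact_mod_cast Nat.cast_le.2 h1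

lemma erlV_bound {c r : ℝ} (hc : 0 < c) (hr : 0 < r) {x : ℝ} (hx : 0 ≤ x) :
    |erlV c r x| ≤ (1/c) * Real.exp (2*r*x) := by
  unfold erlV
  rw [abs_mul, abs_of_pos (by positivity : (0:ℝ) < 1/c)]
  apply mul_le_mul_of_nonneg_left _ (by positivity)
  calc |∑ s ∈ Finset.range ((⌊x⌋).toNat + 1),
      Real.exp (-r * ((s : ℝ) - x)) / (Nat.factorial s : ℝ) * r ^ s * ((s : ℝ) - x) ^ s|
      ≤ ∑ s ∈ Finset.range ((⌊x⌋).toNat + 1),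
        |Real.exp (-r * ((s : ℝ) - x)) / (Nat.factorial s : ℝ) * r ^ s * ((s : ℝ) - x) ^ s| :=
      Finset.abs_sum_le_sum_abs _ _
    _ ≤ ∑ s ∈ Finset.range ((⌊x⌋).toNat + 1),
        Real.exp (r*x) * ((r*x) ^ s / (Nat.factorial s : ℝ)) := by
      apply Finset.sum_le_sum
      intro s hs
      have hsx : (s : ℝ) ≤ x := mem_range_cast_le hx hs
      rw [abs_mul, abs_mul, abs_div, abs_of_pos (Real.exp_pos _),
        abs_of_nonneg (by positivity : (0:ℝ) ≤ (Nat.factorial s : ℝ)),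
        abs_of_nonneg (by positivity : (0:ℝ) ≤ r ^ s), abs_pow,
        abs_of_nonpos (by linarith : (s:ℝ) - x ≤ 0), mul_pow]
      have e1 : Real.exp (-r * ((s:ℝ) - x)) ≤ Real.exp (r*x) := by
        apply Real.exp_le_exp.2; nlinarith [Nat.cast_nonneg (α := ℝ) s]
      have e2 : (-((s:ℝ) - x)) ^ s ≤ x ^ s := by
        apply pow_le_pow_left₀ (by linarith) (by linarith)
      calc Real.exp (-r * ((s:ℝ) - x)) / (Nat.factorial s : ℝ) * r ^ s * (-((s:ℝ) - x)) ^ s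
          = (Real.exp (-r * ((s:ℝ) - x)) * (-((s:ℝ) - x)) ^ s) * (r ^ s / (Nat.factorial s : ℝ)) := by
            ring
          _ ≤ (Real.exp (r*x) * x ^ s) * (r ^ s / (Nat.factorial s : ℝ)) := by
            apply mul_le_mul_of_nonneg_right _ (by positivity)
            exact mul_le_mul e1 e2 (pow_nonneg (by linarith) s) (Real.exp_pos _).le
          _ = Real.exp (r*x) * (r ^ s * x ^ s / (Nat.factorial s : ℝ)) := by ring
    _ = Real.exp (r*x) * ∑ s ∈ Finset.range ((⌊x⌋).toNat + 1),
        (r*x) ^ s / (Nat.factorial s : ℝ) := by rw [Finset.mul_sum]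
    _ ≤ Real.exp (r*x) * Real.exp (r*x) := by
      apply mul_le_mul_of_nonneg_left _ (Real.exp_pos _).le
      exact Real.sum_le_exp_of_nonneg (by positivity) _
    _ = Real.exp (2*r*x) := by rw [← Real.exp_add]; congr 1; ring

set_option maxHeartbeats 1600000 in
lemma erlV_measurable (c r : ℝ) : Measurable (erlV c r) := by
  have h : Measurable fun p : ℝ × ℕ => (1 / c) * ∑ s ∈ Finset.range (p.2 + 1),
      Real.exp (-r * ((s : ℝ) - p.1)) / (Nat.factorial s : ℝ) * r ^ s * ((s : ℝ) - p.1) ^ s := by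
    apply measurable_from_prod_countable_left
    intro n
    dsimp only
    have : Continuous fun x : ℝ => (1 / c) * ∑ s ∈ Finset.range (n + 1),
        Real.exp (-r * ((s : ℝ) - x)) / (Nat.factorial s : ℝ) * r ^ s * ((s : ℝ) - x) ^ s := by
      apply Continuous.mul continuous_const
      apply continuous_finset_sum
      intro s _
      fun_prop
    exact this.measurable
  have htn : Measurable fun x : ℝ => (⌊x⌋).toNat := by
    exact Measurable.comp (g := Int.toNat) (measurable_of_countable _) Int.measurable_floor
  have he : erlV c r = (fun p : ℝ × ℕ => (1 / c) * ∑ s ∈ Finset.range (p.2 + 1),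
      Real.exp (-r * ((s : ℝ) - p.1)) / (Nat.factorial s : ℝ) * r ^ s * ((s : ℝ) - p.1) ^ s)
      ∘ fun x => (x, (⌊x⌋).toNat) := rfl
  rw [he]
  exact h.comp (measurable_id.prodMk htn)

lemma erlV_integrableOn {c r β : ℝ} (hc : 0 < c) (hr : 0 < r) (hβ : 2*r + 1 ≤ β) :
    IntegrableOn (fun x => Real.exp (-β*x) * erlV c r x) (Ioi (0:ℝ)) := by
  have hmeas : AEStronglyMeasurable (fun x => Real.exp (-β*x) * erlV c r x)
      (volume.restrict (Ioi (0:ℝ))) :=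
    ((Real.measurable_exp.comp (measurable_id.const_mul (-β))).mul
      (erlV_measurable c r)).aestronglyMeasurable
  apply Integrable.mono' (g := fun x => (1/c) * Real.exp (-((β - 2*r))*x)) _ hmeas
  · filter_upwards [ae_restrict_mem measurableSet_Ioi] with x hx
    have hx0 : (0:ℝ) ≤ x := le_of_lt hx
    calc ‖Real.exp (-β*x) * erlV c r x‖
        = Real.exp (-β*x) * |erlV c r x| := by
          rw [Real.norm_eq_abs, abs_mul, abs_of_pos (Real.exp_pos _)]
      _ ≤ Real.exp (-β*x) * ((1/c) * Real.exp (2*r*x)) :=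
          mul_le_mul_of_nonneg_left (erlV_bound hc hr hx0) (Real.exp_pos _).le
      _ = (1/c) * Real.exp (-((β - 2*r))*x) := by
          rw [show Real.exp (-β*x) * ((1/c) * Real.exp (2*r*x))
            = (1/c) * (Real.exp (-β*x) * Real.exp (2*r*x)) from by ring, ← Real.exp_add]
          congr 2
          ring
  · exact (exp_neg_integrableOn_Ioi 0 (show (0:ℝ) < β - 2*r by linarith)).const_mul (1/c)

lemma erlV_laplace {c lam β : ℝ} (hc : 0 < c) (hlam : 0 < lam) (hβ : 2*(lam/c) + 1 ≤ β) :
    ∫ x in Ioi (0:ℝ), Real.exp (-β*x) * erlV c (lam/c) x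
      = 1 / (c*β + lam * (Real.exp (-β) - 1)) := by
  set r := lam / c with hrdef
  have hr : 0 < r := div_pos hlam hc
  have hβr : r < β := by linarith
  have hint : ∀ s : ℕ, Integrable ((Ici (s:ℝ)).indicator (erlG r β s))
      (volume.restrict (Ioi (0:ℝ))) := fun s => aux_term_integrable hr hβr s
  have hsum : Summable (fun s : ℕ =>
      ∫ x in Ioi (0:ℝ), ‖(Ici (s:ℝ)).indicator (erlG r β s) x‖) := by
    have he : (fun s : ℕ => ∫ x in Ioi (0:ℝ), ‖(Ici (s:ℝ)).indicator (erlG r β s) x‖)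
        = fun s : ℕ => Real.exp (-β*s) * r^s / (β-r)^(s+1) :=
      funext (aux_term_norm_integral hr hβr)
    rw [he]; exact aux_summable_norm hr hβ
  have h1 := hasSum_integral_of_summable_integral_norm hint hsum
  have h2 : HasSum (fun s : ℕ => ∫ x in Ioi (0:ℝ), (Ici (s:ℝ)).indicator (erlG r β s) x)
      (1/(β - r + r * Real.exp (-β))) := by
    have he : (fun s : ℕ => ∫ x in Ioi (0:ℝ), (Ici (s:ℝ)).indicator (erlG r β s) x)
        = fun s : ℕ => Real.exp (-β*s) * (-r)^s / (β-r)^(s+1) :=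
      funext (aux_term_integral hr hβr)
    rw [he]; exact aux_hasSum hr hβ
  have h3 : ∫ x in Ioi (0:ℝ), (∑' s : ℕ, (Ici (s:ℝ)).indicator (erlG r β s) x)
      = 1/(β - r + r * Real.exp (-β)) := h1.unique h2
  have h4 : ∫ x in Ioi (0:ℝ), Real.exp (-β*x) * erlV c r x
      = ∫ x in Ioi (0:ℝ), (1/c) * ∑' s : ℕ, (Ici (s:ℝ)).indicator (erlG r β s) x := by
    apply setIntegral_congr_fun measurableSet_Ioi
    intro x hx
    exact erlV_eq_tsum x (le_of_lt hx)
  rw [h4, integral_const_mul, h3]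
  have hcβ : c*β + lam * (Real.exp (-β) - 1) = c * (β - r + r * Real.exp (-β)) := by
    rw [hrdef]
    field_simp
    ring
  rw [hcβ, one_div_mul_one_div]

lemma aux_img : (fun x : ℝ => Real.exp (-x)) '' Ioi 0 = Ioo 0 1 := by
  ext t
  constructor
  · rintro ⟨x, hx, rfl⟩
    exact ⟨Real.exp_pos _, Real.exp_lt_one_iff.2 (by simpa using hx)⟩
  · rintro ⟨h0, h1⟩
    exact ⟨-Real.log t, by simpa using Real.log_neg h0 h1, by simp [Real.exp_log h0]⟩

lemma aux_deriv (x : ℝ) : HasDerivWithinAt (fun x : ℝ => Real.exp (-x))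
    (Real.exp (-x) * (-1)) (Ioi 0) x :=
  ((hasDerivAt_neg x).exp).hasDerivWithinAt

lemma aux_inj : InjOn (fun x : ℝ => Real.exp (-x)) (Ioi 0) := by
  intro a _ b _ h
  have := Real.exp_injective h
  linarith [neg_injective this]

lemma aux_cov (g : ℝ → ℝ) :
    ∫ t in Ioo (0:ℝ) 1, g t = ∫ x in Ioi (0:ℝ), Real.exp (-x) * g (Real.exp (-x)) := by
  have h := integral_image_eq_integral_abs_deriv_smul (s := Ioi (0:ℝ))
    (f := fun x => Real.exp (-x)) (f' := fun x => Real.exp (-x) * (-1)) measurableSet_Ioi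
    (fun x _ => aux_deriv x) aux_inj g
  rw [aux_img] at h
  rw [h]
  apply setIntegral_congr_fun measurableSet_Ioi
  intro x _
  dsimp only
  rw [smul_eq_mul, abs_mul, abs_of_pos (Real.exp_pos _)]
  norm_num

lemma aux_cov_int (g : ℝ → ℝ) :
    IntegrableOn g (Ioo (0:ℝ) 1) ↔
      IntegrableOn (fun x => Real.exp (-x) * g (Real.exp (-x))) (Ioi (0:ℝ)) := by
  have h := integrableOn_image_iff_integrableOn_abs_deriv_smul (s := Ioi (0:ℝ))
    (f := fun x => Real.exp (-x)) (f' := fun x => Real.exp (-x) * (-1)) measurableSet_Ioi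
    (fun x _ => aux_deriv x) aux_inj g
  rw [aux_img] at h
  rw [h]
  constructor <;> intro hi <;> refine hi.congr_fun (fun x _ => ?_) measurableSet_Ioi
  · beta_reduce; rw [smul_eq_mul, abs_mul, abs_of_pos (Real.exp_pos _)]; norm_num
  · beta_reduce; rw [smul_eq_mul, abs_mul, abs_of_pos (Real.exp_pos _)]; norm_num

lemma aux_exp_collapse (k : ℕ) (x : ℝ) :
    Real.exp (-x) * (Real.exp (-x))^k = Real.exp (-((k:ℝ)+1)*x) := by
  rw [← Real.exp_nat_mul, ← Real.exp_add]
  congr 1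
  ring

lemma aux_mul_int {G0 : ℝ → ℝ} (hm : Measurable G0)
    (hG0int : IntegrableOn G0 (Ioo (0:ℝ) 1)) {h : ℝ → ℝ} (hh : Continuous h) :
    IntegrableOn (fun t => h t * G0 t) (Ioo (0:ℝ) 1) := by
  obtain ⟨M, hM⟩ := isCompact_Icc.exists_bound_of_continuousOn
    (s := Icc (0:ℝ) 1) hh.continuousOn
  apply Integrable.mono' (hG0int.norm.const_mul M)
    ((hh.measurable.mul hm).aestronglyMeasurable)
  filter_upwards [ae_restrict_mem measurableSet_Ioo] with t ht
  rw [Pi.mul_apply, norm_mul]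
  exact mul_le_mul_of_nonneg_right (hM t (Ioo_subset_Icc_self ht)) (norm_nonneg _)

lemma aux_weierstrass {h : ℝ → ℝ} (hh : Continuous h) {ε : ℝ} (hε : 0 < ε) :
    ∃ p : Polynomial ℝ, ∀ t ∈ Icc (0:ℝ) 1, |h t - p.eval t| ≤ ε := by
  let hC : C(Icc (0:ℝ) 1, ℝ) := ⟨fun z => h z, hh.comp continuous_subtype_val⟩
  have hmem : hC ∈ closure ((polynomialFunctions (Icc (0:ℝ) 1)) : Set C(Icc (0:ℝ) 1, ℝ)) := by
    have h1 : hC ∈ (polynomialFunctions (Icc (0:ℝ) 1)).topologicalClosure := by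
      rw [polynomialFunctions_closure_eq_top]
      trivial
    exact h1
  rw [Metric.mem_closure_iff] at hmem
  obtain ⟨q, hq1, hq2⟩ := hmem ε hε
  rw [polynomialFunctions_coe] at hq1
  obtain ⟨p, hp⟩ := hq1
  refine ⟨p, fun t ht => ?_⟩
  have h1 : dist (hC ⟨t, ht⟩) (q ⟨t, ht⟩) ≤ dist hC q := ContinuousMap.dist_apply_le_dist _
  have h2 : q ⟨t, ht⟩ = Polynomial.eval t p := by rw [← hp]; rfl
  rw [h2, Real.dist_eq] at h1
  exact le_trans h1 (le_of_lt hq2)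

lemma aux_testfn_zero {G0 : ℝ → ℝ} (hm : Measurable G0)
    (hG0int : IntegrableOn G0 (Ioo (0:ℝ) 1))
    (hmono : ∀ n : ℕ, ∫ t in Ioo (0:ℝ) 1, t^n * G0 t = 0) :
    ∀ᵐ t ∂(volume.restrict (Ioo (0:ℝ) 1)), G0 t = 0 := by
  have hGi : ∀ i : ℕ, IntegrableOn (fun t => t^i * G0 t) (Ioo (0:ℝ) 1) :=
    fun i => aux_mul_int hm hG0int (continuous_pow i)
  have hpoly : ∀ p : Polynomial ℝ, ∫ t in Ioo (0:ℝ) 1, p.eval t * G0 t = 0 := by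
    intro p
    have he : ∀ t : ℝ, p.eval t * G0 t
        = ∑ i ∈ Finset.range (p.natDegree+1), p.coeff i * (t^i * G0 t) := by
      intro t
      rw [Polynomial.eval_eq_sum_range, Finset.sum_mul]
      apply Finset.sum_congr rfl
      intro i _
      ring
    rw [show (fun t => p.eval t * G0 t)
      = fun t => ∑ i ∈ Finset.range (p.natDegree+1), p.coeff i * (t^i * G0 t) from funext he]
    rw [integral_finset_sum _ (fun i _ => ((hGi i).const_mul _))]
    refine Finset.sum_eq_zero fun i _ => ?_
    rw [integral_const_mul, hmono i, mul_zero]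
  have hcont : ∀ h : ℝ → ℝ, Continuous h → ∫ t in Ioo (0:ℝ) 1, h t * G0 t = 0 := by
    intro h hh
    set C := ∫ t in Ioo (0:ℝ) 1, ‖G0 t‖ with hCdef
    have hC0 : 0 ≤ C := integral_nonneg (fun t => norm_nonneg _)
    have key : ∀ ε > 0, |∫ t in Ioo (0:ℝ) 1, h t * G0 t| ≤ ε * C := by
      intro ε hε
      obtain ⟨p, hp⟩ := aux_weierstrass hh hε
      have hhp : Continuous fun t => h t - p.eval t := hh.sub (Polynomial.continuous p)
      have hsplit : ∫ t in Ioo (0:ℝ) 1, h t * G0 t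
          = (∫ t in Ioo (0:ℝ) 1, (h t - p.eval t) * G0 t)
            + ∫ t in Ioo (0:ℝ) 1, p.eval t * G0 t := by
        rw [← integral_add (aux_mul_int hm hG0int hhp)
          (aux_mul_int hm hG0int (Polynomial.continuous p))]
        apply setIntegral_congr_fun measurableSet_Ioo
        intro t _
        ring
      rw [hsplit, hpoly p, add_zero]
      have hb : ‖∫ t in Ioo (0:ℝ) 1, (h t - p.eval t) * G0 t‖
          ≤ ∫ t in Ioo (0:ℝ) 1, ε * ‖G0 t‖ := by
        apply norm_integral_le_of_norm_le (hG0int.norm.const_mul ε)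
        filter_upwards [ae_restrict_mem measurableSet_Ioo] with t ht
        rw [norm_mul]
        exact mul_le_mul_of_nonneg_right
          (by simpa [Real.norm_eq_abs] using hp t (Ioo_subset_Icc_self ht)) (norm_nonneg _)
      rw [integral_const_mul] at hb
      simpa [Real.norm_eq_abs, hCdef] using hb
    have hz : |∫ t in Ioo (0:ℝ) 1, h t * G0 t| = 0 := by
      by_contra h0
      have hpos : 0 < |∫ t in Ioo (0:ℝ) 1, h t * G0 t| :=
        lt_of_le_of_ne (abs_nonneg _) (Ne.symm h0)
      have hk := key (|∫ t in Ioo (0:ℝ) 1, h t * G0 t| / (2*(C+1))) (by positivity)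
      rw [div_mul_eq_mul_div, le_div_iff₀ (by positivity : (0:ℝ) < 2*(C+1))] at hk
      nlinarith [mul_nonneg hpos.le hC0]
    exact abs_eq_zero.1 hz
  set G : ℝ → ℝ := (Ioo (0:ℝ) 1).indicator G0 with hG
  have hGint : Integrable G := (integrable_indicator_iff measurableSet_Ioo).2 hG0int
  have hGae : ∀ᵐ t ∂(volume : Measure ℝ), G t = 0 := by
    apply ae_eq_zero_of_integral_contDiff_smul_eq_zero hGint.locallyIntegrable
    intro g hgs hgc
    have he : (fun t => g t • G t) = (Ioo (0:ℝ) 1).indicator (fun t => g t * G0 t) := by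
      funext t
      by_cases ht : t ∈ Ioo (0:ℝ) 1 <;> simp [hG, ht]
    rw [he, integral_indicator measurableSet_Ioo]
    exact hcont g hgs.continuous
  have h3 : G =ᵐ[volume.restrict (Ioo (0:ℝ) 1)] G0 := by
    filter_upwards [ae_restrict_mem measurableSet_Ioo] with t ht
    simp [hG, ht]
  exact h3.symm.trans (ae_restrict_of_ae hGae)

/-- `W` is the `q`-scale function of a spectrally negative Lévy process with
Laplace exponent `ψ`: it vanishes on the negative half-line, is continuous on
`[0,∞)`, and its Laplace transform equals `1/(ψ(β) - q)` for `β > Φ(q)`. -/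
def IsScaleFunction (ψ : ℝ → ℝ) (q : ℝ) (W : ℝ → ℝ) : Prop :=
  ContinuousOn W (Set.Ici 0) ∧ (∀ x < 0, W x = 0) ∧
    ∀ β : ℝ, sSup {y : ℝ | ψ y = q} < β →
      (∫ x in Set.Ioi (0 : ℝ), Real.exp (-β * x) * W x) = 1 / (ψ β - q)

/-- Laplace exponent of a spectrally negative compound Poisson process with
drift `c`, intensity `lam` and jump distribution `Pm` (of the negative of the jumps). -/
noncomputable def cppExponent (c lam : ℝ) (Pm : Measure ℝ) (u : ℝ) : ℝ :=
  c * u + lam * ∫ s, (Real.exp (-u * s) - 1) ∂Pm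

/-- `k`-fold convolution power of a measure on `ℝ`, with `convPow μ 0 = δ₀`. -/
noncomputable def convPow (μ : Measure ℝ) : ℕ → Measure ℝ
  | 0 => Measure.dirac 0
  | k + 1 => Measure.map (fun p : ℝ × ℝ => p.1 + p.2) ((convPow μ k).prod μ)

/-- The kernel `g_k(s,x) = ((λ/c)^k/k!) e^{-((q+λ)/c)(s-x)} (s-x)^k`. -/
noncomputable def gker (q lam c : ℝ) (k : ℕ) (s x : ℝ) : ℝ :=
  ((lam / c) ^ k / Nat.factorial k) * Real.exp (-((q + lam) / c) * (s - x)) * (s - x) ^ k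

/-- Erlang's formula: the `0`-scale function of `L_t = ct - N_t` (Poisson process `N` with
intensity `lam`, i.e. jump distribution `δ₁`) is
`W⁰(x) = (1/c) ∑_{s=0}^{⌊x⌋} (e^{-(λ/c)(s-x)}/s!) (λ/c)^s (s-x)^s`. -/
theorem erlang_scale_function (c lam : ℝ) (hc : 0 < c) (hlam : 0 < lam)
    (W : ℝ → ℝ)
    (hW : IsScaleFunction (fun u => c * u + lam * (Real.exp (-u) - 1)) 0 W) :
    ∀ x : ℝ, 0 ≤ x →
      W x = (1 / c) * ∑ s ∈ Finset.range ((⌊x⌋).toNat + 1),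
        Real.exp (-(lam / c) * ((s : ℝ) - x)) / (Nat.factorial s : ℝ) *
          (lam / c) ^ s * ((s : ℝ) - x) ^ s := by
  obtain ⟨hWcont, hWneg, hWlap⟩ := hW
  have hr : 0 < lam / c := div_pos hlam hc
  set r : ℝ := lam / c with hrdef
  set V : ℝ → ℝ := erlV c r with hVdef
  set B : ℝ := 2*r + 1 with hBdef
  -- measurability of W
  have hWmax : Continuous fun y : ℝ => W (max y 0) :=
    hWcont.comp_continuous (continuous_id.max continuous_const)
      (fun y => mem_Ici.2 (le_max_right _ _))
  have hWeq : W = (Ici (0:ℝ)).indicator (fun y => W (max y 0)) := by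
    funext y
    by_cases hy : (0:ℝ) ≤ y
    · rw [indicator_of_mem (mem_Ici.2 hy), max_eq_left hy]
    · rw [indicator_of_notMem (by simpa using hy), hWneg y (lt_of_not_ge hy)]
  have hWmeas : Measurable W := by
    rw [hWeq]; exact hWmax.measurable.indicator measurableSet_Ici
  set f : ℝ → ℝ := fun y => W y - V y with hfdef
  have hfmeas : Measurable f := hWmeas.sub (erlV_measurable c r)
  -- bound on the supremum of roots
  have hΦ : sSup {y : ℝ | c * y + lam * (Real.exp (-y) - 1) = 0} ≤ r := by
    apply Real.sSup_le _ hr.le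
    intro y hy
    simp only [mem_setOf_eq] at hy
    have h1 : 0 < Real.exp (-y) := Real.exp_pos _
    rw [hrdef, le_div_iff₀ hc]
    nlinarith
  -- the key Laplace-transform facts for f
  have hmain : ∀ β : ℝ, B ≤ β →
      IntegrableOn (fun y => Real.exp (-β*y) * f y) (Ioi (0:ℝ)) ∧
      ∫ y in Ioi (0:ℝ), Real.exp (-β*y) * f y = 0 := by
    intro β hβ
    have hβ' : 2*r + 1 ≤ β := by rw [← hBdef]; exact hβ
    have hiV : IntegrableOn (fun y => Real.exp (-β*y) * V y) (Ioi (0:ℝ)) :=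
      erlV_integrableOn hc hr hβ'
    have hvV : ∫ y in Ioi (0:ℝ), Real.exp (-β*y) * V y
        = 1/(c*β + lam*(Real.exp (-β) - 1)) := erlV_laplace hc hlam hβ'
    have hψpos : 0 < c*β + lam*(Real.exp (-β) - 1) := by
      have h1 : c*β + lam*(Real.exp (-β) - 1) = c * (β - r + r * Real.exp (-β)) := by
        rw [hrdef]; field_simp; ring
      rw [h1]
      obtain ⟨_, hp⟩ := aux_facts hr hβ'
      have he : 0 < Real.exp (-β) := Real.exp_pos _
      have h2 : 0 < β - r + r * Real.exp (-β) := by nlinarith [mul_pos hr he]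
      exact mul_pos hc h2
    have hsup : sSup {y : ℝ | (fun u => c * u + lam * (Real.exp (-u) - 1)) y = 0} < β := by
      refine lt_of_le_of_lt hΦ ?_
      linarith
    have hval := hWlap β hsup
    simp only [sub_zero] at hval
    have hiW : IntegrableOn (fun y => Real.exp (-β*y) * W y) (Ioi (0:ℝ)) := by
      by_contra hni
      rw [integral_undef hni] at hval
      exact (one_div_ne_zero (ne_of_gt hψpos)) hval.symm
    constructor
    · have hsub2 : IntegrableOn ((fun y => Real.exp (-β*y) * W y)
          - fun y => Real.exp (-β*y) * V y) (Ioi (0:ℝ)) := hiW.sub hiV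
      exact hsub2.congr_fun (fun y _ => by simp only [Pi.sub_apply, hfdef]; ring)
        measurableSet_Ioi
    · have hsub := integral_sub hiW hiV
      have he : ∫ y in Ioi (0:ℝ), Real.exp (-β*y) * f y
          = (∫ y in Ioi (0:ℝ), Real.exp (-β*y) * W y)
            - ∫ y in Ioi (0:ℝ), Real.exp (-β*y) * V y := by
        rw [← hsub]
        apply setIntegral_congr_fun measurableSet_Ioi
        intro y _
        simp only [hfdef]
        ring
      rw [he, hval, hvV, sub_self]
  -- setting up the Müntz/Weierstrass argument
  obtain ⟨b, hbB⟩ := exists_nat_ge B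
  set G0 : ℝ → ℝ := fun t => t^b * f (-Real.log t) with hG0def
  have hG0meas : Measurable G0 :=
    (measurable_id.pow_const b).mul (hfmeas.comp Real.measurable_log.neg)
  have hG0int : IntegrableOn G0 (Ioo (0:ℝ) 1) := by
    rw [aux_cov_int]
    have h1 := (hmain ((b:ℝ)+1) (by linarith)).1
    refine h1.congr_fun (fun x _ => ?_) measurableSet_Ioi
    simp only [hG0def, Real.log_exp, neg_neg]
    rw [show Real.exp (-((b:ℝ)+1)*x) = Real.exp (-x) * (Real.exp (-x))^b from
      (aux_exp_collapse b x).symm]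
    ring
  have hmono : ∀ n : ℕ, ∫ t in Ioo (0:ℝ) 1, t^n * G0 t = 0 := by
    intro n
    rw [aux_cov (fun t => t^n * G0 t)]
    have hβn : B ≤ ((n+b:ℕ):ℝ)+1 := by
      push_cast
      linarith [hbB, Nat.cast_nonneg (α := ℝ) n]
    have h1 := (hmain (((n+b:ℕ):ℝ)+1) hβn).2
    refine Eq.trans (setIntegral_congr_fun measurableSet_Ioi fun x _ => ?_) h1
    simp only [hG0def, Real.log_exp, neg_neg]
    rw [show Real.exp (-(((n+b:ℕ):ℝ)+1)*x) = Real.exp (-x) * (Real.exp (-x))^(n+b) from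
      (aux_exp_collapse (n+b) x).symm, pow_add]
    ring
  have hG0ae := aux_testfn_zero hG0meas hG0int hmono
  -- transfer: f = 0 a.e. on Ioi 0
  have hIzero : ∫ y in Ioi (0:ℝ), Real.exp (-((b:ℝ)+1)*y) * |f y| = 0 := by
    have h2 : (fun t => |G0 t|) =ᵐ[volume.restrict (Ioo (0:ℝ) 1)] 0 :=
      hG0ae.mono (fun t ht => by simp [ht])
    have h1 : ∫ t in Ioo (0:ℝ) 1, |G0 t| = 0 := by
      rw [integral_congr_ae h2]
      simp
    rw [aux_cov (fun t => |G0 t|)] at h1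
    refine Eq.trans (setIntegral_congr_fun measurableSet_Ioi fun x _ => ?_) h1
    simp only [hG0def, Real.log_exp, neg_neg]
    rw [abs_mul, abs_pow, abs_of_pos (Real.exp_pos _)]
    rw [show Real.exp (-((b:ℝ)+1)*x) = Real.exp (-x) * (Real.exp (-x))^b from
      (aux_exp_collapse b x).symm]
    ring
  have hfae : ∀ᵐ y ∂(volume.restrict (Ioi (0:ℝ))), f y = 0 := by
    have hint : Integrable (fun y => Real.exp (-((b:ℝ)+1)*y) * |f y|)
        (volume.restrict (Ioi (0:ℝ))) := by
      have h2 : IntegrableOn (fun y => ‖Real.exp (-((b:ℝ)+1)*y) * f y‖) (Ioi (0:ℝ)) :=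
        ((hmain ((b:ℝ)+1) (by linarith)).1).norm
      exact h2.congr_fun (fun y _ => by
        beta_reduce; rw [norm_mul, Real.norm_eq_abs, Real.norm_eq_abs, abs_of_pos (Real.exp_pos _)])
        measurableSet_Ioi
    have hnn : 0 ≤ᵐ[volume.restrict (Ioi (0:ℝ))]
        fun y => Real.exp (-((b:ℝ)+1)*y) * |f y| :=
      Filter.Eventually.of_forall fun y => by positivity
    have h3 := (integral_eq_zero_iff_of_nonneg_ae hnn hint).1 hIzero
    filter_upwards [h3] with y hy
    rcases mul_eq_zero.1 hy with h | h
    · exact absurd h (Real.exp_ne_zero _)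
    · exact abs_eq_zero.1 h
  -- final pointwise identification
  intro x hx
  show W x = V x
  set n : ℕ := (⌊x⌋).toNat with hn
  have hfloor : ((n:ℝ)) ≤ x := floor_cast_le hx
  have hxn1 : x < (n:ℝ) + 1 := by
    have h0 := Int.floor_nonneg.2 hx
    have e : ((n:ℝ)) = ((⌊x⌋ : ℤ) : ℝ) := by rw [hn]; exact_mod_cast Int.toNat_of_nonneg h0
    rw [e]; exact Int.lt_floor_add_one x
  have hVc : ContinuousWithinAt V (Ici x) x := by
    have hFc : Continuous (fun y : ℝ => (1/c) * ∑ s ∈ Finset.range (n+1),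
        Real.exp (-r*((s:ℝ)-y)) / (Nat.factorial s:ℝ) * r^s * ((s:ℝ)-y)^s) := by
      apply Continuous.mul continuous_const
      apply continuous_finset_sum
      intro s _
      fun_prop
    apply hFc.continuousWithinAt.congr_of_eventuallyEq
    · have hmem : Ico x ((n:ℝ)+1) ∈ 𝓝[Ici x] x := by
        rw [← Set.Ici_inter_Iio]
        exact inter_mem_nhdsWithin _ (Iio_mem_nhds hxn1)
      filter_upwards [hmem] with y hy
      obtain ⟨hy1, hy2⟩ := hy
      have hyn : (⌊y⌋).toNat = n := by
        have h1 : ⌊y⌋ = (n:ℤ) := by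
          rw [Int.floor_eq_iff]
          constructor
          · push_cast; linarith
          · push_cast; linarith
        rw [h1]
        simp
      rw [hVdef]
      show (1/c) * ∑ s ∈ Finset.range ((⌊y⌋).toNat + 1),
        Real.exp (-r*((s:ℝ)-y)) / (Nat.factorial s:ℝ) * r^s * ((s:ℝ)-y)^s = _
      rw [hyn]
    · rw [hVdef]
      rfl
  have hWcx : ContinuousWithinAt W (Ici x) x :=
    (hWcont x (mem_Ici.2 hx)).mono (fun y hy => le_trans hx hy)
  set T : Set ℝ := {y | f y = 0} ∩ Ioi x with hT
  have hsubT : T ⊆ Ici x := fun y hy => mem_Ici.2 (le_of_lt hy.2)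
  have hneBot : (𝓝[T] x).NeBot := by
    rw [← mem_closure_iff_nhdsWithin_neBot, Metric.mem_closure_iff]
    intro ε hε
    by_contra hcon
    push_neg at hcon
    have hms : MeasurableSet {y : ℝ | ¬ f y = 0} := by
      have he7 : {y : ℝ | ¬ f y = 0} = f ⁻¹' ({0}ᶜ) := rfl
      rw [he7]
      exact hfmeas (measurableSet_singleton 0).compl
    have hnull : volume ({y | ¬ f y = 0} ∩ Ioi 0) = 0 := by
      have h4 := hfae
      rw [ae_iff] at h4
      rwa [Measure.restrict_apply hms] at h4
    have hsub2 : Ioo x (x+ε) ⊆ {y | ¬ f y = 0} ∩ Ioi 0 := by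
      intro y hy
      refine ⟨fun h0 => ?_, lt_of_le_of_lt hx hy.1⟩
      have hd : dist x y < ε := by
        rw [Real.dist_eq, abs_of_neg (by linarith [hy.1] : x - y < 0)]
        linarith [hy.2]
      exact absurd (hcon y ⟨h0, hy.1⟩) (not_le.2 hd)
    have h5 := measure_mono_null hsub2 hnull
    rw [Real.volume_Ioo] at h5
    rw [ENNReal.ofReal_eq_zero] at h5
    linarith
  have h1 : Tendsto W (𝓝[T] x) (𝓝 (W x)) := hWcx.mono hsubT
  have h2 : Tendsto V (𝓝[T] x) (𝓝 (V x)) := hVc.mono hsubT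
  have hev : V =ᶠ[𝓝[T] x] W := by
    filter_upwards [self_mem_nhdsWithin] with y hy
    have h6 : W y - V y = 0 := hy.1
    linarith
  have h3 : Tendsto W (𝓝[T] x) (𝓝 (V x)) := Filter.Tendsto.congr' hev h2
  exact tendsto_nhds_unique h1 h3
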